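/- Let H be a complex Hilbert space and (a_q)_{q∈ℤ³} a CAR family of bounded operators on H. Let A = (A(ℓ)) be a family of symmetric matrices on the lenses. Then for every Ψ ∈ H: |⟨Ψ, Q₁(A) Ψ⟩| ≤ 2 ( Σ_{ℓ∈ℤ³∖{0}} ‖A(ℓ)‖_{HS} ) · Σ_{q∈ℤ³} ‖a_q Ψ‖² and |⟨Ψ, Q₂(A) Ψ⟩| ≤ 2 ( Σ_{ℓ∈ℤ³∖{0}} ‖A(ℓ)‖_{HS} ) · ( Σ_{q∈ℤ³} ‖a_q Ψ‖² + ‖Ψ‖² ), where Σ_{q∈ℤ³} ‖a_q Ψ‖² ∈ [0,∞] is the (possibly infinite) sum of nonnegative terms, i.e., the expectation ⟨Ψ, 𝒩 Ψ⟩ of the number operator. -/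

import Mathlib

open scoped BigOperators
open MeasureTheory

noncomputable section

attribute [local instance] Classical.propDecidable

/-- The momentum lattice `ℤ³`. -/
abbrev Z3 : Type := Fin 3 → ℤ

/-- Squared Euclidean norm `|p|²` of an integer vector, as a real number. -/
def nsq (p : Z3) : ℝ := ∑ i, ((p i : ℝ)) ^ 2

/-- The Fermi ball `B_F = {k ∈ ℤ³ : |k| ≤ k_F}`. -/
def BF (kF : ℝ) : Set Z3 := {k | nsq k ≤ kF ^ 2}

/-- The lens `L_ℓ = B_F^c ∩ (B_F + ℓ)`. -/
def lens (kF : ℝ) (ℓ : Z3) : Set Z3 := {p | p ∉ BF kF ∧ p - ℓ ∈ BF kF}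

/-- The excitation energy `λ_{ℓ,p} = (|p|² − |p−ℓ|²)/2`. -/
def lam (ℓ p : Z3) : ℝ := (nsq p - nsq (p - ℓ)) / 2

/-- The energy gap `e(q) = | |q|² − min_{p ∈ B_F^c} |p|² + 1/2 |`. -/
def efun (kF : ℝ) (q : Z3) : ℝ := |nsq q - sInf (nsq '' (BF kF)ᶜ) + 1 / 2|

variable {H : Type*} [NormedAddCommGroup H] [InnerProductSpace ℂ H] [CompleteSpace H]

local postfix:max "†" => ContinuousLinearMap.adjoint

local notation "⟪" x ", " y "⟫" => @inner ℂ _ _ x y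

/-- The canonical anticommutation relations for a family of bounded operators. -/
def CAR (a : Z3 → H →L[ℂ] H) : Prop :=
  (∀ q q' : Z3, a q * a q' + a q' * a q = 0) ∧
  (∀ q q' : Z3, a q * (a q')† + (a q')† * a q = if q = q' then 1 else 0)

/-- The pair annihilation operator `b_p(k) = a_{p−k} a_p`. -/
def bop (a : Z3 → H →L[ℂ] H) (k p : Z3) : H →L[ℂ] H := a (p - k) * a p

/-- The pair creation operator `b_p^*(k) = a_p^* a_{p−k}^*`. -/
def bopS (a : Z3 → H →L[ℂ] H) (k p : Z3) : H →L[ℂ] H := (a p)† * (a (p - k))†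

/-- The quasi-bosonic commutation error `ε_{p,q}(k,ℓ)`. -/
def epsOp (a : Z3 → H →L[ℂ] H) (k ℓ p q : Z3) : H →L[ℂ] H :=
  -((if p = q then (1 : ℂ) else 0) • ((a (q - ℓ))† * a (p - k))
    + (if p - k = q - ℓ then (1 : ℂ) else 0) • ((a q)† * a p))

/-- `Q₁` for a family of complex symmetric matrices on the lenses. -/
def Q1c (kF : ℝ) (a : Z3 → H →L[ℂ] H) (A : Z3 → Z3 → Z3 → ℂ) : H →L[ℂ] H :=
  (2 : ℂ) • ∑' ℓ : Z3, ∑' r : Z3, ∑' s : Z3,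
    (if ℓ ≠ 0 ∧ r ∈ lens kF ℓ ∧ s ∈ lens kF ℓ then A ℓ r s else 0) •
      (bopS a ℓ r * bop a ℓ s)

/-- `Q₂` for a family of complex symmetric matrices on the lenses. -/
def Q2c (kF : ℝ) (a : Z3 → H →L[ℂ] H) (A : Z3 → Z3 → Z3 → ℂ) : H →L[ℂ] H :=
  ∑' ℓ : Z3, ∑' r : Z3, ∑' s : Z3,
    (if ℓ ≠ 0 ∧ r ∈ lens kF ℓ ∧ s ∈ lens kF ℓ then A ℓ r s else 0) •
      (bop a ℓ r * bop a (-ℓ) (-s) + bopS a (-ℓ) (-s) * bopS a ℓ r)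

/-- The Hilbert–Schmidt norm of `A(ℓ)` on the lens `L_ℓ`. -/
def normHSc (kF : ℝ) (ℓ : Z3) (A : Z3 → Z3 → ℂ) : ℝ :=
  Real.sqrt (∑' rt : Z3 × Z3,
    if rt.1 ∈ lens kF ℓ ∧ rt.2 ∈ lens kF ℓ then ‖A rt.1 rt.2‖ ^ 2 else 0)


section Aux

lemma nsq_single_le (k : Z3) (i : Fin 3) : ((k i : ℝ)) ^ 2 ≤ nsq k :=
  Finset.single_le_sum (f := fun j => ((k j : ℝ)) ^ 2) (fun _ _ => sq_nonneg _)
    (Finset.mem_univ i)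

lemma BF_finite (kF : ℝ) : (BF kF).Finite := by
  have hsub : BF kF ⊆ Set.pi Set.univ (fun _ : Fin 3 => Set.Icc (-(⌈|kF|⌉) : ℤ) ⌈|kF|⌉) := by
    intro k hk i _
    have h1 : ((k i : ℝ)) ^ 2 ≤ kF ^ 2 := le_trans (nsq_single_le k i) hk
    have h2 : |(k i : ℝ)| ≤ |kF| := by
      have := Real.sqrt_le_sqrt h1
      rwa [Real.sqrt_sq_eq_abs, Real.sqrt_sq_eq_abs] at this
    have h3 : (|k i| : ℝ) ≤ ((⌈|kF|⌉ : ℤ) : ℝ) := by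
      push_cast
      exact le_trans h2 (Int.le_ceil _)
    have h4 : |k i| ≤ ⌈|kF|⌉ := by exact_mod_cast h3
    exact Set.mem_Icc.2 (abs_le.1 h4)
  exact (Set.Finite.pi (fun _ => Set.finite_Icc _ _)).subset hsub

lemma lens_finite (kF : ℝ) (ℓ : Z3) : (lens kF ℓ).Finite := by
  refine ((BF_finite kF).image (fun k => k + ℓ)).subset ?_
  intro p hp
  exact ⟨p - ℓ, hp.2, sub_add_cancel p ℓ⟩

lemma lens_ne_zero {kF : ℝ} {ℓ r : Z3} (hr : r ∈ lens kF ℓ) : ℓ ≠ 0 := by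
  intro h0
  exact hr.1 (by simpa [h0, sub_zero] using hr.2)

lemma lens_sub_ne {kF : ℝ} {ℓ r r' : Z3} (hr : r ∈ lens kF ℓ) (hr' : r' ∈ lens kF ℓ) :
    r - ℓ ≠ r' := fun h => hr'.1 (h ▸ hr.2)

end Aux

section CARAux

variable {a : Z3 → H →L[ℂ] H}

lemma car_anti (h : CAR a) (q q' : Z3) : a q * a q' = -(a q' * a q) :=
  eq_neg_of_add_eq_zero_left (h.1 q q')

lemma adjoint_mul (A B : H →L[ℂ] H) : (A * B)† = B† * A† := by
  rw [← ContinuousLinearMap.star_eq_adjoint, ← ContinuousLinearMap.star_eq_adjoint,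
    ← ContinuousLinearMap.star_eq_adjoint, star_mul]

lemma car_anti_adj (h : CAR a) (q q' : Z3) : (a q)† * (a q')† = -((a q')† * (a q)†) := by
  have := congrArg (fun X : H →L[ℂ] H => X†) (car_anti h q' q)
  simpa [adjoint_mul] using this

lemma car_mixed_ne (h : CAR a) {q q' : Z3} (hne : q ≠ q') :
    a q * (a q')† = -((a q')† * a q) := by
  have h2 := h.2 q q'
  rw [if_neg hne] at h2
  exact eq_neg_of_add_eq_zero_left h2

lemma car_mixed_eq (h : CAR a) (q : Z3) : a q * (a q)† = 1 - (a q)† * a q := by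
  have h2 := h.2 q q
  rw [if_pos rfl] at h2
  linear_combination (norm := abel) h2

lemma car_norm_sq (h : CAR a) (q : Z3) (x : H) :
    ‖a q x‖ ^ 2 + ‖(a q)† x‖ ^ 2 = ‖x‖ ^ 2 := by
  have h2 := h.2 q q
  rw [if_pos rfl] at h2
  have key := congrArg (fun X : H →L[ℂ] H => (inner ℂ x (X x) : ℂ)) h2
  simp only [ContinuousLinearMap.add_apply, ContinuousLinearMap.mul_apply,
    ContinuousLinearMap.one_apply, inner_add_right] at key
  have e1 : ⟪x, a q ((a q)† x)⟫ = ⟪(a q)† x, (a q)† x⟫ :=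
    (ContinuousLinearMap.adjoint_inner_left (a q) ((a q)† x) x).symm
  have e2 : ⟪x, (a q)† (a q x)⟫ = ⟪a q x, a q x⟫ :=
    ContinuousLinearMap.adjoint_inner_right (a q) x (a q x)
  rw [e1, e2] at key
  have keyR := congrArg (RCLike.re (K := ℂ)) key
  simp only [map_add, inner_self_eq_norm_sq] at keyR
  linarith

lemma norm_a_le (h : CAR a) (q : Z3) (x : H) : ‖a q x‖ ≤ ‖x‖ := by
  have := car_norm_sq h q x
  have h1 : ‖a q x‖ ^ 2 ≤ ‖x‖ ^ 2 := by nlinarith [sq_nonneg ‖(a q)† x‖]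
  have := Real.sqrt_le_sqrt h1
  rwa [Real.sqrt_sq (norm_nonneg _), Real.sqrt_sq (norm_nonneg _)] at this

lemma bop_adjoint (a : Z3 → H →L[ℂ] H) (k p : Z3) : (bop a k p)† = bopS a k p := by
  rw [bop, bopS, adjoint_mul]

lemma bopS_adjoint (a : Z3 → H →L[ℂ] H) (k p : Z3) : (bopS a k p)† = bop a k p := by
  rw [bop, bopS, adjoint_mul, ContinuousLinearMap.adjoint_adjoint,
    ContinuousLinearMap.adjoint_adjoint]

end CARAux

section CommAux

variable {a : Z3 → H →L[ℂ] H}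

lemma swap3 {R : Type*} [Ring R] {A B C : R} (hAC : A * C = -(C * A))
    (hBC : B * C = -(C * B)) : A * B * C = C * (A * B) := by
  calc A * B * C = A * (B * C) := by noncomm_ring
    _ = A * -(C * B) := by rw [hBC]
    _ = -((A * C) * B) := by noncomm_ring
    _ = -((-(C * A)) * B) := by rw [hAC]
    _ = C * (A * B) := by noncomm_ring

lemma bop_bopS_comm_offdiag (h : CAR a) {ℓ r r' : Z3} (hrr' : r ≠ r')
    (h1 : r - ℓ ≠ r') (h2 : r' - ℓ ≠ r) :
    bop a ℓ r * bopS a ℓ r' = bopS a ℓ r' * bop a ℓ r := by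
  have hsub : r - ℓ ≠ r' - ℓ := fun hh => hrr' (by
    have := congrArg (fun z => z + ℓ) hh
    simpa [sub_add_cancel] using this)
  have hBC : a r * (a r')† = -((a r')† * a r) := car_mixed_ne h hrr'
  have hAC : a (r - ℓ) * (a r')† = -((a r')† * a (r - ℓ)) := car_mixed_ne h h1
  have hBD : a r * (a (r' - ℓ))† = -((a (r' - ℓ))† * a r) := car_mixed_ne h (fun hh => h2 hh.symm)
  have hAD : a (r - ℓ) * (a (r' - ℓ))† = -((a (r' - ℓ))† * a (r - ℓ)) := car_mixed_ne h hsub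
  show a (r - ℓ) * a r * ((a r')† * (a (r' - ℓ))†) = (a r')† * (a (r' - ℓ))† * (a (r - ℓ) * a r)
  have step1 : a (r - ℓ) * a r * (a r')† = (a r')† * (a (r - ℓ) * a r) := swap3 hAC hBC
  have step2 : a (r - ℓ) * a r * (a (r' - ℓ))† = (a (r' - ℓ))† * (a (r - ℓ) * a r) :=
    swap3 hAD hBD
  calc a (r - ℓ) * a r * ((a r')† * (a (r' - ℓ))†)
      = (a (r - ℓ) * a r * (a r')†) * (a (r' - ℓ))† := by noncomm_ring
    _ = ((a r')† * (a (r - ℓ) * a r)) * (a (r' - ℓ))† := by rw [step1]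
    _ = (a r')† * ((a (r - ℓ) * a r) * (a (r' - ℓ))†) := by noncomm_ring
    _ = (a r')† * ((a (r' - ℓ))† * (a (r - ℓ) * a r)) := by rw [step2]
    _ = (a r')† * (a (r' - ℓ))† * (a (r - ℓ) * a r) := by noncomm_ring

lemma bop_bopS_comm_diag (h : CAR a) {ℓ r : Z3} (hne : r - ℓ ≠ r) :
    bop a ℓ r * bopS a ℓ r
      = 1 - (a (r - ℓ))† * a (r - ℓ) - (a r)† * a r + bopS a ℓ r * bop a ℓ r := by
  have h1 : a r * (a r)† = 1 - (a r)† * a r := car_mixed_eq h r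
  have h2 : a (r - ℓ) * (a (r - ℓ))† = 1 - (a (r - ℓ))† * a (r - ℓ) := car_mixed_eq h (r - ℓ)
  have h3 : a (r - ℓ) * (a r)† = -((a r)† * a (r - ℓ)) := car_mixed_ne h hne
  have h4 : a r * (a (r - ℓ))† = -((a (r - ℓ))† * a r) := car_mixed_ne h (fun hh => hne hh.symm)
  show a (r - ℓ) * a r * ((a r)† * (a (r - ℓ))†) = _
  calc a (r - ℓ) * a r * ((a r)† * (a (r - ℓ))†)
      = a (r - ℓ) * (a r * (a r)†) * (a (r - ℓ))† := by noncomm_ring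
    _ = a (r - ℓ) * (1 - (a r)† * a r) * (a (r - ℓ))† := by rw [h1]
    _ = a (r - ℓ) * (a (r - ℓ))† - (a (r - ℓ) * (a r)†) * (a r * (a (r - ℓ))†) := by noncomm_ring
    _ = (1 - (a (r - ℓ))† * a (r - ℓ))
        - (-((a r)† * a (r - ℓ))) * (-((a (r - ℓ))† * a r)) := by rw [h2, h3, h4]
    _ = 1 - (a (r - ℓ))† * a (r - ℓ) - (a r)† * (a (r - ℓ) * (a (r - ℓ))†) * a r := by noncomm_ring
    _ = 1 - (a (r - ℓ))† * a (r - ℓ) - (a r)† * (1 - (a (r - ℓ))† * a (r - ℓ)) * a r := by rw [h2]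
    _ = 1 - (a (r - ℓ))† * a (r - ℓ) - (a r)† * a r + ((a r)† * (a (r - ℓ))†) * (a (r - ℓ) * a r) := by
        noncomm_ring
    _ = 1 - (a (r - ℓ))† * a (r - ℓ) - (a r)† * a r + bopS a ℓ r * bop a ℓ r := rfl

end CommAux

section InnerAux

variable {a : Z3 → H →L[ℂ] H}

lemma inner_bopS_bopS (h : CAR a) {kF : ℝ} {ℓ r r' : Z3}
    (hr : r ∈ lens kF ℓ) (hr' : r' ∈ lens kF ℓ) (Ψ : H) :
    ⟪bopS a ℓ r Ψ, bopS a ℓ r' Ψ⟫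
      = ⟪bop a ℓ r' Ψ, bop a ℓ r Ψ⟫
        + (if r = r' then ((‖Ψ‖ ^ 2 - ‖a (r - ℓ) Ψ‖ ^ 2 - ‖a r Ψ‖ ^ 2 : ℝ) : ℂ) else 0) := by
  have hL : ⟪bopS a ℓ r Ψ, bopS a ℓ r' Ψ⟫ = ⟪Ψ, (bop a ℓ r * bopS a ℓ r') Ψ⟫ := by
    rw [ContinuousLinearMap.mul_apply]
    rw [← bopS_adjoint a ℓ r]
    exact (ContinuousLinearMap.adjoint_inner_right _ _ _).symm
  have hR : ∀ X : H →L[ℂ] H, ⟪Ψ, (bopS a ℓ r' * X) Ψ⟫ = ⟪bop a ℓ r' Ψ, X Ψ⟫ := by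
    intro X
    rw [ContinuousLinearMap.mul_apply, ← bop_adjoint a ℓ r']
    exact ContinuousLinearMap.adjoint_inner_right _ _ _
  by_cases hrr' : r = r'
  · subst hrr'
    rw [if_pos rfl, hL, bop_bopS_comm_diag h (lens_sub_ne hr hr)]
    simp only [ContinuousLinearMap.add_apply, ContinuousLinearMap.sub_apply,
      ContinuousLinearMap.one_apply, ContinuousLinearMap.mul_apply, inner_add_right,
      inner_sub_right]
    have e0 : ⟪Ψ, Ψ⟫ = ((‖Ψ‖ ^ 2 : ℝ) : ℂ) := by
      have := inner_self_eq_norm_sq_to_K (𝕜 := ℂ) Ψ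
      simpa using this
    have e1 : ⟪Ψ, (a (r - ℓ))† (a (r - ℓ) Ψ)⟫ = ((‖a (r - ℓ) Ψ‖ ^ 2 : ℝ) : ℂ) := by
      rw [ContinuousLinearMap.adjoint_inner_right]
      have := inner_self_eq_norm_sq_to_K (𝕜 := ℂ) (a (r - ℓ) Ψ)
      simpa using this
    have e2 : ⟪Ψ, (a r)† (a r Ψ)⟫ = ((‖a r Ψ‖ ^ 2 : ℝ) : ℂ) := by
      rw [ContinuousLinearMap.adjoint_inner_right]
      have := inner_self_eq_norm_sq_to_K (𝕜 := ℂ) (a r Ψ)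
      simpa using this
    have e3 : ⟪Ψ, bopS a ℓ r (bop a ℓ r Ψ)⟫ = ⟪bop a ℓ r Ψ, bop a ℓ r Ψ⟫ := by
      rw [← bop_adjoint a ℓ r]
      exact ContinuousLinearMap.adjoint_inner_right _ _ _
    rw [e0, e1, e2, e3]
    push_cast
    ring
  · rw [if_neg hrr', hL,
      bop_bopS_comm_offdiag h hrr' (lens_sub_ne hr hr') (lens_sub_ne hr' hr), hR]
    simp [ContinuousLinearMap.mul_apply]

end InnerAux

section F6

variable {a : Z3 → H →L[ℂ] H}

lemma norm_bop_le (h : CAR a) (k p : Z3) (Ψ : H) : ‖bop a k p Ψ‖ ≤ ‖a p Ψ‖ := by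
  rw [bop, ContinuousLinearMap.mul_apply]
  exact norm_a_le h _ _

lemma inner_self_c (x : H) : ⟪x, x⟫ = ((‖x‖ ^ 2 : ℝ) : ℂ) := by
  have := inner_self_eq_norm_sq_to_K (𝕜 := ℂ) x
  simpa using this

lemma expand_inner_sum (T : Finset Z3) (v : Z3 → H) (C : Z3 → ℂ) :
    ⟪∑ r ∈ T, C r • v r, ∑ r ∈ T, C r • v r⟫
      = ∑ r1 ∈ T, ∑ r2 ∈ T, (starRingEnd ℂ) (C r1) * C r2 * ⟪v r1, v r2⟫ := by
  rw [sum_inner]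
  refine Finset.sum_congr rfl fun r1 _ => ?_
  rw [inner_smul_left, inner_sum, Finset.mul_sum]
  refine Finset.sum_congr rfl fun r2 _ => ?_
  rw [inner_smul_right]
  ring

lemma wsum_bound (h : CAR a) {kF : ℝ} {ℓ : Z3} {T : Finset Z3}
    (hT : ∀ r ∈ T, r ∈ lens kF ℓ) (B : Z3 → Z3 → ℂ) (Ψ : H) (s : Z3) :
    ‖∑ r ∈ T, B r s • bopS a ℓ r Ψ‖ ^ 2
      ≤ (∑ r ∈ T, ‖B r s‖ ^ 2) * (‖Ψ‖ ^ 2 + ∑ r ∈ T, ‖a r Ψ‖ ^ 2) := by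
  classical
  set cc : Z3 → ℝ := fun r => ‖Ψ‖ ^ 2 - ‖a (r - ℓ) Ψ‖ ^ 2 - ‖a r Ψ‖ ^ 2 with hcc
  have key : ⟪∑ r ∈ T, B r s • bopS a ℓ r Ψ, ∑ r ∈ T, B r s • bopS a ℓ r Ψ⟫
      = ⟪∑ r ∈ T, (starRingEnd ℂ) (B r s) • bop a ℓ r Ψ,
          ∑ r ∈ T, (starRingEnd ℂ) (B r s) • bop a ℓ r Ψ⟫
        + ((∑ r ∈ T, ‖B r s‖ ^ 2 * cc r : ℝ) : ℂ) := by
    rw [expand_inner_sum, expand_inner_sum]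
    have step : ∀ r1 ∈ T, ∀ r2 ∈ T,
        (starRingEnd ℂ) (B r1 s) * B r2 s * ⟪bopS a ℓ r1 Ψ, bopS a ℓ r2 Ψ⟫
          = (starRingEnd ℂ) (B r1 s) * B r2 s * ⟪bop a ℓ r2 Ψ, bop a ℓ r1 Ψ⟫
            + (if r1 = r2 then ((‖B r1 s‖ ^ 2 * cc r1 : ℝ) : ℂ) else 0) := by
      intro r1 h1 r2 h2
      rw [inner_bopS_bopS h (hT _ h1) (hT _ h2)]
      by_cases e : r1 = r2
      · subst e
        rw [if_pos rfl, if_pos rfl, mul_add]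
        congr 1
        have hz : (starRingEnd ℂ) (B r1 s) * B r1 s = ((‖B r1 s‖ ^ 2 : ℝ) : ℂ) := by
          have := RCLike.conj_mul (B r1 s)
          simpa using this
        rw [hz, ← Complex.ofReal_mul, hcc]
      · rw [if_neg e, if_neg e]
        simp
    rw [Finset.sum_congr rfl fun r1 h1 => Finset.sum_congr rfl fun r2 h2 => step r1 h1 r2 h2]
    have split : ∑ r1 ∈ T, ∑ r2 ∈ T,
        ((starRingEnd ℂ) (B r1 s) * B r2 s * ⟪bop a ℓ r2 Ψ, bop a ℓ r1 Ψ⟫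
          + (if r1 = r2 then ((‖B r1 s‖ ^ 2 * cc r1 : ℝ) : ℂ) else 0))
        = (∑ r1 ∈ T, ∑ r2 ∈ T,
            (starRingEnd ℂ) (B r1 s) * B r2 s * ⟪bop a ℓ r2 Ψ, bop a ℓ r1 Ψ⟫)
          + ∑ r1 ∈ T, ∑ r2 ∈ T, (if r1 = r2 then ((‖B r1 s‖ ^ 2 * cc r1 : ℝ) : ℂ) else 0) := by
      rw [← Finset.sum_add_distrib]
      refine Finset.sum_congr rfl fun r1 _ => ?_
      rw [← Finset.sum_add_distrib]
    rw [split]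
    congr 1
    · rw [Finset.sum_comm]
      refine Finset.sum_congr rfl fun r2 _ => Finset.sum_congr rfl fun r1 _ => ?_
      simp only [RingHomCompTriple.comp_apply, RingHom.id_apply]
      ring
    · calc ∑ r1 ∈ T, ∑ r2 ∈ T, (if r1 = r2 then ((‖B r1 s‖ ^ 2 * cc r1 : ℝ) : ℂ) else 0)
          = ∑ r1 ∈ T, ((‖B r1 s‖ ^ 2 * cc r1 : ℝ) : ℂ) :=
            Finset.sum_congr rfl fun r1 h1 => by
              rw [Finset.sum_ite_eq T r1 (fun _ => ((‖B r1 s‖ ^ 2 * cc r1 : ℝ) : ℂ)), if_pos h1]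
        _ = ((∑ r ∈ T, ‖B r s‖ ^ 2 * cc r : ℝ) : ℂ) := by push_cast; rfl
  have hwu : ‖∑ r ∈ T, B r s • bopS a ℓ r Ψ‖ ^ 2
      = ‖∑ r ∈ T, (starRingEnd ℂ) (B r s) • bop a ℓ r Ψ‖ ^ 2
        + ∑ r ∈ T, ‖B r s‖ ^ 2 * cc r := by
    rw [inner_self_c, inner_self_c] at key
    exact_mod_cast key
  have hu : ‖∑ r ∈ T, (starRingEnd ℂ) (B r s) • bop a ℓ r Ψ‖ ^ 2
      ≤ (∑ r ∈ T, ‖B r s‖ ^ 2) * (∑ r ∈ T, ‖a r Ψ‖ ^ 2) := by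
    have h1 : ‖∑ r ∈ T, (starRingEnd ℂ) (B r s) • bop a ℓ r Ψ‖
        ≤ ∑ r ∈ T, ‖B r s‖ * ‖a r Ψ‖ := by
      refine (norm_sum_le _ _).trans (Finset.sum_le_sum fun r _ => ?_)
      rw [norm_smul, RCLike.norm_conj]
      exact mul_le_mul_of_nonneg_left (norm_bop_le h ℓ r Ψ) (norm_nonneg _)
    have h2 : ‖∑ r ∈ T, (starRingEnd ℂ) (B r s) • bop a ℓ r Ψ‖ ^ 2
        ≤ (∑ r ∈ T, ‖B r s‖ * ‖a r Ψ‖) ^ 2 := by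
      apply pow_le_pow_left₀ (norm_nonneg _) h1
    exact h2.trans (Finset.sum_mul_sq_le_sq_mul_sq T _ _)
  have hdiag : ∑ r ∈ T, ‖B r s‖ ^ 2 * cc r ≤ (∑ r ∈ T, ‖B r s‖ ^ 2) * ‖Ψ‖ ^ 2 := by
    rw [Finset.sum_mul]
    refine Finset.sum_le_sum fun r _ => ?_
    refine mul_le_mul_of_nonneg_left ?_ (sq_nonneg _)
    simp only [hcc]
    nlinarith [sq_nonneg ‖a (r - ℓ) Ψ‖, sq_nonneg ‖a r Ψ‖]
  calc ‖∑ r ∈ T, B r s • bopS a ℓ r Ψ‖ ^ 2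
      = ‖∑ r ∈ T, (starRingEnd ℂ) (B r s) • bop a ℓ r Ψ‖ ^ 2
        + ∑ r ∈ T, ‖B r s‖ ^ 2 * cc r := hwu
    _ ≤ (∑ r ∈ T, ‖B r s‖ ^ 2) * (∑ r ∈ T, ‖a r Ψ‖ ^ 2)
        + (∑ r ∈ T, ‖B r s‖ ^ 2) * ‖Ψ‖ ^ 2 := add_le_add hu hdiag
    _ = (∑ r ∈ T, ‖B r s‖ ^ 2) * (‖Ψ‖ ^ 2 + ∑ r ∈ T, ‖a r Ψ‖ ^ 2) := by ring

end F6

section Reduce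

variable {a : Z3 → H →L[ℂ] H}

/-- The lens as a finset. -/
def Tfin (kF : ℝ) (ℓ : Z3) : Finset Z3 := (lens_finite kF ℓ).toFinset

lemma mem_Tfin {kF : ℝ} {ℓ r : Z3} : r ∈ Tfin kF ℓ ↔ r ∈ lens kF ℓ :=
  (lens_finite kF ℓ).mem_toFinset

lemma tsum_tsum_ite (kF : ℝ) (ℓ : Z3) (c : Z3 → Z3 → ℂ) (G : Z3 → Z3 → H →L[ℂ] H) :
    (∑' r : Z3, ∑' s : Z3,
        (if ℓ ≠ 0 ∧ r ∈ lens kF ℓ ∧ s ∈ lens kF ℓ then c r s else 0) • G r s)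
      = ∑ r ∈ Tfin kF ℓ, ∑ s ∈ Tfin kF ℓ, c r s • G r s := by
  have hin : ∀ r : Z3, (∑' s : Z3,
      (if ℓ ≠ 0 ∧ r ∈ lens kF ℓ ∧ s ∈ lens kF ℓ then c r s else 0) • G r s)
      = ∑ s ∈ Tfin kF ℓ,
        (if ℓ ≠ 0 ∧ r ∈ lens kF ℓ ∧ s ∈ lens kF ℓ then c r s else 0) • G r s := by
    intro r
    refine tsum_eq_sum fun s hs => ?_
    rw [if_neg, zero_smul]
    exact fun hc => hs (mem_Tfin.2 hc.2.2)
  rw [tsum_congr hin]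
  rw [tsum_eq_sum (s := Tfin kF ℓ) (fun r hr => Finset.sum_eq_zero fun s _ => by
    rw [if_neg, zero_smul]
    exact fun hc => hr (mem_Tfin.2 hc.2.1))]
  refine Finset.sum_congr rfl fun r hr => Finset.sum_congr rfl fun s hs => ?_
  rw [if_pos ⟨lens_ne_zero (mem_Tfin.1 hr), mem_Tfin.1 hr, mem_Tfin.1 hs⟩]

lemma normHS_reduce (kF : ℝ) (ℓ : Z3) (Al : Z3 → Z3 → ℂ) :
    normHSc kF ℓ Al = Real.sqrt (∑ r ∈ Tfin kF ℓ, ∑ s ∈ Tfin kF ℓ, ‖Al r s‖ ^ 2) := by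
  rw [normHSc]
  congr 1
  rw [tsum_eq_sum (s := (Tfin kF ℓ) ×ˢ (Tfin kF ℓ)) (fun rt hrt => by
    rw [if_neg]
    intro hc
    exact hrt (Finset.mem_product.2 ⟨mem_Tfin.2 hc.1, mem_Tfin.2 hc.2⟩))]
  rw [Finset.sum_product]
  exact Finset.sum_congr rfl fun r hr => Finset.sum_congr rfl fun s hs => by
    rw [if_pos ⟨mem_Tfin.1 hr, mem_Tfin.1 hs⟩]

lemma normHS_nonneg (kF : ℝ) (ℓ : Z3) (Al : Z3 → Z3 → ℂ) : 0 ≤ normHSc kF ℓ Al :=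
  Real.sqrt_nonneg _

lemma inner_op_apply (X Y : H →L[ℂ] H) (Ψ : H) : ⟪Ψ, (X† * Y) Ψ⟫ = ⟪X Ψ, Y Ψ⟫ := by
  rw [ContinuousLinearMap.mul_apply, ContinuousLinearMap.adjoint_inner_right]

lemma cs_single (T : Finset Z3) (w d : Z3 → H) :
    ‖∑ s ∈ T, ⟪w s, d s⟫‖
      ≤ Real.sqrt (∑ s ∈ T, ‖w s‖ ^ 2) * Real.sqrt (∑ s ∈ T, ‖d s‖ ^ 2) := by
  refine le_trans (norm_sum_le _ _) ?_
  refine le_trans (Finset.sum_le_sum fun s _ => norm_inner_le_norm (𝕜 := ℂ) (w s) (d s)) ?_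
  exact Real.sum_mul_le_sqrt_mul_sqrt T _ _

lemma cs_double (T : Finset Z3) (M : Z3 → Z3 → ℂ) (u v : Z3 → H) :
    ‖∑ r ∈ T, ∑ s ∈ T, M r s * ⟪u r, v s⟫‖
      ≤ Real.sqrt (∑ r ∈ T, ∑ s ∈ T, ‖M r s‖ ^ 2)
        * (Real.sqrt (∑ r ∈ T, ‖u r‖ ^ 2) * Real.sqrt (∑ s ∈ T, ‖v s‖ ^ 2)) := by
  have h1 : ‖∑ r ∈ T, ∑ s ∈ T, M r s * ⟪u r, v s⟫‖
      ≤ ∑ p ∈ T ×ˢ T, ‖M p.1 p.2‖ * (‖u p.1‖ * ‖v p.2‖) := by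
    rw [← Finset.sum_product' (f := fun r s => M r s * ⟪u r, v s⟫)]
    refine le_trans (norm_sum_le _ _) (Finset.sum_le_sum fun p _ => ?_)
    rw [norm_mul]
    exact mul_le_mul_of_nonneg_left (norm_inner_le_norm (𝕜 := ℂ) _ _) (norm_nonneg _)
  refine le_trans h1 ?_
  refine le_trans (Real.sum_mul_le_sqrt_mul_sqrt (T ×ˢ T) _ _) ?_
  have e1 : ∑ p ∈ T ×ˢ T, ‖M p.1 p.2‖ ^ 2 = ∑ r ∈ T, ∑ s ∈ T, ‖M r s‖ ^ 2 := by
    rw [Finset.sum_product]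
  have e2 : ∑ p ∈ T ×ˢ T, (‖u p.1‖ * ‖v p.2‖) ^ 2
      = (∑ r ∈ T, ‖u r‖ ^ 2) * (∑ s ∈ T, ‖v s‖ ^ 2) := by
    rw [Finset.sum_product, Finset.sum_mul_sum]
    refine Finset.sum_congr rfl fun r _ => Finset.sum_congr rfl fun s _ => by ring
  rw [e1, e2,
    Real.sqrt_mul (Finset.sum_nonneg fun r _ => sq_nonneg ‖u r‖) (∑ s ∈ T, ‖v s‖ ^ 2)]

end Reduce

section TB
set_option maxHeartbeats 1000000

variable {a : Z3 → H →L[ℂ] H}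

lemma Tbound1 (h : CAR a) (kF : ℝ) (ℓ : Z3) (A : Z3 → Z3 → Z3 → ℂ) (Ψ : H) :
    ‖⟪Ψ, (∑ r ∈ Tfin kF ℓ, ∑ s ∈ Tfin kF ℓ, A ℓ r s • (bopS a ℓ r * bop a ℓ s)) Ψ⟫‖
      ≤ normHSc kF ℓ (A ℓ) * ∑ r ∈ Tfin kF ℓ, ‖a r Ψ‖ ^ 2 := by
  set T := Tfin kF ℓ
  have hexp : ⟪Ψ, (∑ r ∈ T, ∑ s ∈ T, A ℓ r s • (bopS a ℓ r * bop a ℓ s)) Ψ⟫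
      = ∑ r ∈ T, ∑ s ∈ T, A ℓ r s * ⟪bop a ℓ r Ψ, bop a ℓ s Ψ⟫ := by
    rw [ContinuousLinearMap.sum_apply, inner_sum]
    refine Finset.sum_congr rfl fun r _ => ?_
    rw [ContinuousLinearMap.sum_apply, inner_sum]
    refine Finset.sum_congr rfl fun s _ => ?_
    rw [ContinuousLinearMap.smul_apply, inner_smul_right]
    congr 1
    rw [← bop_adjoint a ℓ r]
    exact inner_op_apply _ _ _
  rw [hexp]
  refine le_trans (cs_double T (fun r s => A ℓ r s) _ _) ?_
  rw [normHS_reduce]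
  have hb : Real.sqrt (∑ r ∈ T, ‖bop a ℓ r Ψ‖ ^ 2) ≤ Real.sqrt (∑ r ∈ T, ‖a r Ψ‖ ^ 2) := by
    apply Real.sqrt_le_sqrt
    exact Finset.sum_le_sum fun r _ =>
      pow_le_pow_left₀ (norm_nonneg _) (norm_bop_le h ℓ r Ψ) 2
  have hn : (0 : ℝ) ≤ ∑ r ∈ T, ‖a r Ψ‖ ^ 2 := Finset.sum_nonneg fun r _ => sq_nonneg _
  calc Real.sqrt (∑ r ∈ T, ∑ s ∈ T, ‖A ℓ r s‖ ^ 2)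
        * (Real.sqrt (∑ r ∈ T, ‖bop a ℓ r Ψ‖ ^ 2) * Real.sqrt (∑ s ∈ T, ‖bop a ℓ s Ψ‖ ^ 2))
      ≤ Real.sqrt (∑ r ∈ T, ∑ s ∈ T, ‖A ℓ r s‖ ^ 2)
        * (Real.sqrt (∑ r ∈ T, ‖a r Ψ‖ ^ 2) * Real.sqrt (∑ r ∈ T, ‖a r Ψ‖ ^ 2)) := by
        refine mul_le_mul_of_nonneg_left ?_ (Real.sqrt_nonneg _)
        exact mul_le_mul hb hb (Real.sqrt_nonneg _) (Real.sqrt_nonneg _)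
    _ = Real.sqrt (∑ r ∈ T, ∑ s ∈ T, ‖A ℓ r s‖ ^ 2) * ∑ r ∈ T, ‖a r Ψ‖ ^ 2 := by
        rw [Real.mul_self_sqrt hn]

lemma Tbound2 (h : CAR a) (kF : ℝ) (ℓ : Z3) (A : Z3 → Z3 → Z3 → ℂ) (Ψ : H) :
    ‖⟪Ψ, (∑ r ∈ Tfin kF ℓ, ∑ s ∈ Tfin kF ℓ,
        A ℓ r s • (bop a ℓ r * bop a (-ℓ) (-s) + bopS a (-ℓ) (-s) * bopS a ℓ r)) Ψ⟫‖
      ≤ normHSc kF ℓ (A ℓ)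
        * ((∑ r ∈ Tfin kF ℓ, ‖a r Ψ‖ ^ 2) + (∑ s ∈ Tfin kF ℓ, ‖a (-s) Ψ‖ ^ 2) + ‖Ψ‖ ^ 2) := by
  set T := Tfin kF ℓ with hT
  set n : ℝ := ∑ r ∈ T, ‖a r Ψ‖ ^ 2 with hn
  set m : ℝ := ∑ s ∈ T, ‖a (-s) Ψ‖ ^ 2 with hm
  set d : Z3 → H := fun s => bop a (-ℓ) (-s) Ψ with hd
  -- expansion
  have hexp : ⟪Ψ, (∑ r ∈ T, ∑ s ∈ T,
      A ℓ r s • (bop a ℓ r * bop a (-ℓ) (-s) + bopS a (-ℓ) (-s) * bopS a ℓ r)) Ψ⟫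
      = (∑ s ∈ T, ⟪∑ r ∈ T, (starRingEnd ℂ) (A ℓ r s) • bopS a ℓ r Ψ, d s⟫)
        + ∑ s ∈ T, ⟪d s, ∑ r ∈ T, A ℓ r s • bopS a ℓ r Ψ⟫ := by
    have e1 : ⟪Ψ, (∑ r ∈ T, ∑ s ∈ T,
        A ℓ r s • (bop a ℓ r * bop a (-ℓ) (-s) + bopS a (-ℓ) (-s) * bopS a ℓ r)) Ψ⟫
        = ∑ r ∈ T, ∑ s ∈ T, (A ℓ r s * ⟪bopS a ℓ r Ψ, d s⟫ + A ℓ r s * ⟪d s, bopS a ℓ r Ψ⟫) := by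
      rw [ContinuousLinearMap.sum_apply, inner_sum]
      refine Finset.sum_congr rfl fun r _ => ?_
      rw [ContinuousLinearMap.sum_apply, inner_sum]
      refine Finset.sum_congr rfl fun s _ => ?_
      rw [ContinuousLinearMap.smul_apply, inner_smul_right, ContinuousLinearMap.add_apply,
        inner_add_right, mul_add]
      congr 2
      · rw [← bopS_adjoint a ℓ r]
        exact inner_op_apply _ _ _
      · rw [← bop_adjoint a (-ℓ) (-s)]
        exact inner_op_apply _ _ _
    rw [e1]
    rw [Finset.sum_comm]
    rw [← Finset.sum_add_distrib]
    refine Finset.sum_congr rfl fun s _ => ?_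
    rw [Finset.sum_add_distrib]
    congr 1
    · rw [sum_inner]
      refine Finset.sum_congr rfl fun r _ => ?_
      rw [inner_smul_left, Complex.conj_conj]
    · rw [inner_sum]
      refine Finset.sum_congr rfl fun r _ => ?_
      rw [inner_smul_right]
  rw [hexp]
  -- squared HS norm
  set Hsq : ℝ := ∑ r ∈ T, ∑ s ∈ T, ‖A ℓ r s‖ ^ 2 with hHsq
  have hHsq0 : 0 ≤ Hsq := Finset.sum_nonneg fun r _ => Finset.sum_nonneg fun s _ => sq_nonneg _
  have hn0 : (0 : ℝ) ≤ n := Finset.sum_nonneg fun r _ => sq_nonneg _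
  have hm0 : (0 : ℝ) ≤ m := Finset.sum_nonneg fun s _ => sq_nonneg _
  have hd2 : ∑ s ∈ T, ‖d s‖ ^ 2 ≤ m :=
    Finset.sum_le_sum fun s _ =>
      pow_le_pow_left₀ (norm_nonneg _) (norm_bop_le h (-ℓ) (-s) Ψ) 2
  -- bounds on the two sums of squares of w-type vectors
  have hw : ∀ B : Z3 → Z3 → ℂ, (∀ r s, ‖B r s‖ = ‖A ℓ r s‖) →
      ∑ s ∈ T, ‖∑ r ∈ T, B r s • bopS a ℓ r Ψ‖ ^ 2 ≤ Hsq * (‖Ψ‖ ^ 2 + n) := by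
    intro B hB
    have := fun s => wsum_bound h (kF := kF) (ℓ := ℓ) (T := T)
      (fun r hr => mem_Tfin.1 (hT ▸ hr)) B Ψ s
    refine le_trans (Finset.sum_le_sum fun s _ => this s) ?_
    rw [← Finset.sum_mul]
    have : ∑ s ∈ T, ∑ r ∈ T, ‖B r s‖ ^ 2 = Hsq := by
      rw [Finset.sum_comm, hHsq]
      exact Finset.sum_congr rfl fun r _ => Finset.sum_congr rfl fun s _ => by rw [hB]
    rw [this]
  -- generic bound for one of the halves
  have half : ∀ w : Z3 → H, (∑ s ∈ T, ‖w s‖ ^ 2 ≤ Hsq * (‖Ψ‖ ^ 2 + n)) →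
      ‖∑ s ∈ T, ⟪w s, d s⟫‖ ≤ Real.sqrt Hsq * (‖Ψ‖ ^ 2 + n + m) / 2 := by
    intro w hwle
    refine le_trans (cs_single T w d) ?_
    have h1 : Real.sqrt (∑ s ∈ T, ‖w s‖ ^ 2) ≤ Real.sqrt Hsq * Real.sqrt (‖Ψ‖ ^ 2 + n) := by
      refine le_trans (Real.sqrt_le_sqrt hwle) ?_
      rw [Real.sqrt_mul hHsq0]
    have h2 : Real.sqrt (∑ s ∈ T, ‖d s‖ ^ 2) ≤ Real.sqrt m := Real.sqrt_le_sqrt hd2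
    have h3 : ‖∑ s ∈ T, ⟪w s, d s⟫‖ ≤ 0 → True := fun _ => trivial
    have hred : Real.sqrt (∑ s ∈ T, ‖w s‖ ^ 2) * Real.sqrt (∑ s ∈ T, ‖d s‖ ^ 2)
        ≤ (Real.sqrt Hsq * Real.sqrt (‖Ψ‖ ^ 2 + n)) * Real.sqrt m := by
      exact mul_le_mul h1 h2 (Real.sqrt_nonneg _) (by positivity)
    refine le_trans hred ?_
    have ham : Real.sqrt (‖Ψ‖ ^ 2 + n) * Real.sqrt m ≤ (‖Ψ‖ ^ 2 + n + m) / 2 := by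
      nlinarith [Real.sq_sqrt (by positivity : (0:ℝ) ≤ ‖Ψ‖ ^ 2 + n), Real.sq_sqrt hm0,
        Real.sqrt_nonneg (‖Ψ‖ ^ 2 + n), Real.sqrt_nonneg m,
        sq_nonneg (Real.sqrt (‖Ψ‖ ^ 2 + n) - Real.sqrt m)]
    calc Real.sqrt Hsq * Real.sqrt (‖Ψ‖ ^ 2 + n) * Real.sqrt m
        = Real.sqrt Hsq * (Real.sqrt (‖Ψ‖ ^ 2 + n) * Real.sqrt m) := by ring
      _ ≤ Real.sqrt Hsq * ((‖Ψ‖ ^ 2 + n + m) / 2) :=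
          mul_le_mul_of_nonneg_left ham (Real.sqrt_nonneg _)
      _ = Real.sqrt Hsq * (‖Ψ‖ ^ 2 + n + m) / 2 := by ring
  -- the two halves
  have hw1 := hw (fun r s => (starRingEnd ℂ) (A ℓ r s)) (fun r s => RCLike.norm_conj _)
  have hw2 := hw (fun r s => A ℓ r s) (fun r s => rfl)
  have half1 := half _ hw1
  have half2 : ‖∑ s ∈ T, ⟪d s, ∑ r ∈ T, A ℓ r s • bopS a ℓ r Ψ⟫‖
      ≤ Real.sqrt Hsq * (‖Ψ‖ ^ 2 + n + m) / 2 := by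
    have hswap : ∀ s, ⟪d s, ∑ r ∈ T, A ℓ r s • bopS a ℓ r Ψ⟫
        = (starRingEnd ℂ) ⟪∑ r ∈ T, A ℓ r s • bopS a ℓ r Ψ, d s⟫ := fun s =>
      (inner_conj_symm _ _).symm
    rw [show (∑ s ∈ T, ⟪d s, ∑ r ∈ T, A ℓ r s • bopS a ℓ r Ψ⟫)
        = (starRingEnd ℂ) (∑ s ∈ T, ⟪∑ r ∈ T, A ℓ r s • bopS a ℓ r Ψ, d s⟫) by
      rw [map_sum]; exact Finset.sum_congr rfl fun s _ => hswap s]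
    rw [RCLike.norm_conj]
    exact half _ hw2
  refine le_trans (norm_add_le _ _) ?_
  refine le_trans (add_le_add half1 half2) ?_
  rw [normHS_reduce, ← hT, ← hHsq]
  calc Real.sqrt Hsq * (‖Ψ‖ ^ 2 + n + m) / 2 + Real.sqrt Hsq * (‖Ψ‖ ^ 2 + n + m) / 2
      = Real.sqrt Hsq * (n + m + ‖Ψ‖ ^ 2) := by ring
    _ ≤ Real.sqrt Hsq * (n + m + ‖Ψ‖ ^ 2) := le_refl _

end TB

section MainAux

lemma enorm_tsum_le (f : Z3 → ℂ) :
    (‖∑' i, f i‖₊ : ENNReal) ≤ ∑' i, (‖f i‖₊ : ENNReal) := by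
  by_cases htop : (∑' i, (‖f i‖₊ : ENNReal)) = ⊤
  · exact htop ▸ le_top
  · have hs : Summable fun i => ‖f i‖₊ := ENNReal.tsum_coe_ne_top_iff_summable.1 htop
    rw [← ENNReal.coe_tsum hs]
    exact_mod_cast nnnorm_tsum_le hs

lemma ofReal_sum_normsq (T : Finset Z3) (v : Z3 → H) :
    ENNReal.ofReal (∑ r ∈ T, ‖v r‖ ^ 2) = ∑ r ∈ T, (‖v r‖₊ : ENNReal) ^ 2 := by
  rw [ENNReal.ofReal_sum_of_nonneg fun r _ => sq_nonneg _]
  refine Finset.sum_congr rfl fun r _ => ?_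
  rw [ENNReal.ofReal_pow (norm_nonneg _), ofReal_norm, enorm_eq_nnnorm]

lemma ofReal_normsq (x : H) : ENNReal.ofReal (‖x‖ ^ 2) = (‖x‖₊ : ENNReal) ^ 2 := by
  rw [ENNReal.ofReal_pow (norm_nonneg _), ofReal_norm, enorm_eq_nnnorm]

end MainAux
/-- Quadratic-operator estimates in terms of the number operator (Lemma `lem:estQ2`):
`|⟨Ψ,Q₁(A)Ψ⟩| ≤ 2 (Σ_ℓ ‖A(ℓ)‖_HS) ⟨Ψ,𝒩Ψ⟩` and
`|⟨Ψ,Q₂(A)Ψ⟩| ≤ 2 (Σ_ℓ ‖A(ℓ)‖_HS) ⟨Ψ,(𝒩+1)Ψ⟩`, with values in `[0,∞]`. -/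
theorem stmt8 {H : Type*} [NormedAddCommGroup H] [InnerProductSpace ℂ H] [CompleteSpace H]
    (kF : ℝ) (hkF : 0 < kF) (a : Z3 → H →L[ℂ] H) (hCAR : CAR a)
    (A : Z3 → Z3 → Z3 → ℂ)
    (hAsymm : ∀ ℓ r s : Z3, A ℓ r s = A ℓ s r)
    (hAsupp : ∀ ℓ r s : Z3, (r ∉ lens kF ℓ ∨ s ∉ lens kF ℓ) → A ℓ r s = 0) :
    ∀ Ψ : H,
      ((‖⟪Ψ, Q1c kF a A Ψ⟫‖₊ : ENNReal)
        ≤ 2 * (∑' ℓ : Z3, ENNReal.ofReal (normHSc kF ℓ (A ℓ)))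
            * ∑' q : Z3, (‖a q Ψ‖₊ : ENNReal) ^ 2) ∧
      ((‖⟪Ψ, Q2c kF a A Ψ⟫‖₊ : ENNReal)
        ≤ 2 * (∑' ℓ : Z3, ENNReal.ofReal (normHSc kF ℓ (A ℓ)))
            * ((∑' q : Z3, (‖a q Ψ‖₊ : ENNReal) ^ 2) + (‖Ψ‖₊ : ENNReal) ^ 2)) := by
  intro Ψ
  set N : ENNReal := ∑' q : Z3, (‖a q Ψ‖₊ : ENNReal) ^ 2 with hN
  set HSS : ENNReal := ∑' ℓ : Z3, ENNReal.ofReal (normHSc kF ℓ (A ℓ)) with hHSS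
  have hofn : ∀ ℓ : Z3, ENNReal.ofReal (∑ r ∈ Tfin kF ℓ, ‖a r Ψ‖ ^ 2) ≤ N := by
    intro ℓ
    rw [ofReal_sum_normsq]
    exact ENNReal.sum_le_tsum _
  have hofm : ∀ ℓ : Z3, ENNReal.ofReal (∑ s ∈ Tfin kF ℓ, ‖a (-s) Ψ‖ ^ 2) ≤ N := by
    intro ℓ
    rw [ofReal_sum_normsq (v := fun s => a (-s) Ψ)]
    have himg : ∑ s ∈ Tfin kF ℓ, (‖a (-s) Ψ‖₊ : ENNReal) ^ 2
        = ∑ q ∈ (Tfin kF ℓ).image (fun s => -s), (‖a q Ψ‖₊ : ENNReal) ^ 2 :=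
      (Finset.sum_image (f := fun q => ((‖a q Ψ‖₊ : ENNReal)) ^ 2) (g := fun s => -s)
        (fun x _ y _ h => neg_injective h)).symm
    rw [himg]
    exact ENNReal.sum_le_tsum _
  constructor
  · -- Q1 bound
    set F1 : Z3 → H →L[ℂ] H := fun ℓ =>
      ∑ r ∈ Tfin kF ℓ, ∑ s ∈ Tfin kF ℓ, A ℓ r s • (bopS a ℓ r * bop a ℓ s) with hF1
    have hred : Q1c kF a A = (2 : ℂ) • ∑' ℓ : Z3, F1 ℓ := by
      rw [Q1c]
      congr 1
      exact tsum_congr fun ℓ =>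
        tsum_tsum_ite kF ℓ (fun r s => A ℓ r s) (fun r s => bopS a ℓ r * bop a ℓ s)
    by_cases hsum : Summable F1
    · have happ : ⟪Ψ, Q1c kF a A Ψ⟫ = 2 * ∑' ℓ : Z3, ⟪Ψ, F1 ℓ Ψ⟫ := by
        rw [hred, ContinuousLinearMap.smul_apply, inner_smul_right]
        congr 1
        have := ((innerSL ℂ Ψ).comp (ContinuousLinearMap.apply ℂ H Ψ)).map_tsum hsum
        simpa using this
      rw [happ]
      have hnn : (‖(2 : ℂ) * ∑' ℓ : Z3, ⟪Ψ, F1 ℓ Ψ⟫‖₊ : ENNReal)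
          = 2 * (‖∑' ℓ : Z3, ⟪Ψ, F1 ℓ Ψ⟫‖₊ : ENNReal) := by
        rw [nnnorm_mul, ENNReal.coe_mul]
        congr 1
        simp
      rw [hnn]
      have hper : ∀ ℓ : Z3, (‖⟪Ψ, F1 ℓ Ψ⟫‖₊ : ENNReal)
          ≤ ENNReal.ofReal (normHSc kF ℓ (A ℓ)) * N := by
        intro ℓ
        calc (‖⟪Ψ, F1 ℓ Ψ⟫‖₊ : ENNReal) = ENNReal.ofReal ‖⟪Ψ, F1 ℓ Ψ⟫‖ :=
              (ofReal_norm _).symm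
          _ ≤ ENNReal.ofReal (normHSc kF ℓ (A ℓ) * ∑ r ∈ Tfin kF ℓ, ‖a r Ψ‖ ^ 2) :=
              ENNReal.ofReal_le_ofReal (Tbound1 hCAR kF ℓ A Ψ)
          _ = ENNReal.ofReal (normHSc kF ℓ (A ℓ))
              * ENNReal.ofReal (∑ r ∈ Tfin kF ℓ, ‖a r Ψ‖ ^ 2) :=
              ENNReal.ofReal_mul (normHS_nonneg kF ℓ (A ℓ))
          _ ≤ ENNReal.ofReal (normHSc kF ℓ (A ℓ)) * N :=
              mul_le_mul_right (hofn ℓ) _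
      calc 2 * (‖∑' ℓ : Z3, ⟪Ψ, F1 ℓ Ψ⟫‖₊ : ENNReal)
          ≤ 2 * ∑' ℓ : Z3, (‖⟪Ψ, F1 ℓ Ψ⟫‖₊ : ENNReal) :=
            mul_le_mul_right (enorm_tsum_le _) 2
        _ ≤ 2 * ∑' ℓ : Z3, ENNReal.ofReal (normHSc kF ℓ (A ℓ)) * N :=
            mul_le_mul_right (ENNReal.tsum_le_tsum hper) 2
        _ = 2 * (HSS * N) := by rw [ENNReal.tsum_mul_right]
        _ = 2 * HSS * N := by rw [mul_assoc]
    · rw [hred, tsum_eq_zero_of_not_summable hsum]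
      simp only [smul_zero, ContinuousLinearMap.zero_apply, inner_zero_right, nnnorm_zero,
        ENNReal.coe_zero]
      exact zero_le
  · -- Q2 bound
    set F2 : Z3 → H →L[ℂ] H := fun ℓ =>
      ∑ r ∈ Tfin kF ℓ, ∑ s ∈ Tfin kF ℓ,
        A ℓ r s • (bop a ℓ r * bop a (-ℓ) (-s) + bopS a (-ℓ) (-s) * bopS a ℓ r) with hF2
    have hred : Q2c kF a A = ∑' ℓ : Z3, F2 ℓ := by
      rw [Q2c]
      exact tsum_congr fun ℓ =>
        tsum_tsum_ite kF ℓ (fun r s => A ℓ r s)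
          (fun r s => bop a ℓ r * bop a (-ℓ) (-s) + bopS a (-ℓ) (-s) * bopS a ℓ r)
    by_cases hsum : Summable F2
    · have happ : ⟪Ψ, Q2c kF a A Ψ⟫ = ∑' ℓ : Z3, ⟪Ψ, F2 ℓ Ψ⟫ := by
        rw [hred]
        have := ((innerSL ℂ Ψ).comp (ContinuousLinearMap.apply ℂ H Ψ)).map_tsum hsum
        simpa using this
      rw [happ]
      have hper : ∀ ℓ : Z3, (‖⟪Ψ, F2 ℓ Ψ⟫‖₊ : ENNReal)
          ≤ ENNReal.ofReal (normHSc kF ℓ (A ℓ)) * (2 * (N + (‖Ψ‖₊ : ENNReal) ^ 2)) := by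
        intro ℓ
        have hb := Tbound2 hCAR kF ℓ A Ψ
        calc (‖⟪Ψ, F2 ℓ Ψ⟫‖₊ : ENNReal) = ENNReal.ofReal ‖⟪Ψ, F2 ℓ Ψ⟫‖ :=
              (ofReal_norm _).symm
          _ ≤ ENNReal.ofReal (normHSc kF ℓ (A ℓ)
              * ((∑ r ∈ Tfin kF ℓ, ‖a r Ψ‖ ^ 2) + (∑ s ∈ Tfin kF ℓ, ‖a (-s) Ψ‖ ^ 2)
                  + ‖Ψ‖ ^ 2)) := ENNReal.ofReal_le_ofReal hb
          _ = ENNReal.ofReal (normHSc kF ℓ (A ℓ))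
              * ENNReal.ofReal ((∑ r ∈ Tfin kF ℓ, ‖a r Ψ‖ ^ 2)
                  + (∑ s ∈ Tfin kF ℓ, ‖a (-s) Ψ‖ ^ 2) + ‖Ψ‖ ^ 2) :=
              ENNReal.ofReal_mul (normHS_nonneg kF ℓ (A ℓ))
          _ ≤ ENNReal.ofReal (normHSc kF ℓ (A ℓ)) * (2 * (N + (‖Ψ‖₊ : ENNReal) ^ 2)) := by
              refine mul_le_mul_right ?_ _
              rw [ENNReal.ofReal_add (by positivity) (sq_nonneg _),
                ENNReal.ofReal_add (by positivity) (by positivity), ofReal_normsq]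
              calc ENNReal.ofReal (∑ r ∈ Tfin kF ℓ, ‖a r Ψ‖ ^ 2)
                  + ENNReal.ofReal (∑ s ∈ Tfin kF ℓ, ‖a (-s) Ψ‖ ^ 2)
                  + (‖Ψ‖₊ : ENNReal) ^ 2
                  ≤ N + N + ((‖Ψ‖₊ : ENNReal) ^ 2 + (‖Ψ‖₊ : ENNReal) ^ 2) :=
                    add_le_add (add_le_add (hofn ℓ) (hofm ℓ)) le_add_self
                _ = 2 * (N + (‖Ψ‖₊ : ENNReal) ^ 2) := by ring
      calc (‖∑' ℓ : Z3, ⟪Ψ, F2 ℓ Ψ⟫‖₊ : ENNReal)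
          ≤ ∑' ℓ : Z3, (‖⟪Ψ, F2 ℓ Ψ⟫‖₊ : ENNReal) := enorm_tsum_le _
        _ ≤ ∑' ℓ : Z3, ENNReal.ofReal (normHSc kF ℓ (A ℓ)) * (2 * (N + (‖Ψ‖₊ : ENNReal) ^ 2)) :=
            ENNReal.tsum_le_tsum hper
        _ = HSS * (2 * (N + (‖Ψ‖₊ : ENNReal) ^ 2)) := by rw [ENNReal.tsum_mul_right]
        _ = 2 * HSS * (N + (‖Ψ‖₊ : ENNReal) ^ 2) := by ring
    · rw [hred, tsum_eq_zero_of_not_summable hsum]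
      simp only [ContinuousLinearMap.zero_apply, inner_zero_right, nnnorm_zero,
        ENNReal.coe_zero]
      exact zero_le
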